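/- Suppose V has dimension 3 over ℝ. Then every element U of the Clifford algebra Cl(Q) satisfies the degree-4 characteristic polynomial identity (Cayley–Hamilton in Cl(Q)): writing Û = involute(U), Ũ = reverse(U), Û̃ = reverse(involute(U)), one has U⁴ = (U + Û + Ũ + Û̃)·U³ − (U·Ũ + U·Û + U·Û̃ + Û·Û̃ + Ũ·Û̃ + Û·Ũ)·U² + (U·Û·Û̃ + U·Ũ·Û̃ + U·Û·Ũ + Û·Ũ·Û̃)·U − U·Û·Ũ·Û̃. -/

import Mathlib

open CliffordAlgebra

private lemma auxCH {A : Type*} [Ring A] (u1 u2 u3 u4 : A)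
    (h14 : u1 * u4 = u4 * u1)
    (hb1 : (u2 + u3) * u1 = u1 * (u2 + u3))
    (hq1 : u2 * u3 * u1 = u1 * (u2 * u3)) :
    u1 ^ 4 =
      (u1 + u2 + u3 + u4) * u1 ^ 3 -
        (u1 * u3 + u1 * u2 + u1 * u4 + u2 * u4 + u3 * u4 + u2 * u3) * u1 ^ 2 +
        (u1 * u2 * u4 + u1 * u3 * u4 + u1 * u2 * u3 + u2 * u3 * u4) * u1 -
        u1 * u2 * u3 * u4 := by
  have k1 : u1 * u4 - u4 * u1 = 0 := by rw [h14, sub_self]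
  have k2 : (u2 + u3) * u1 - u1 * (u2 + u3) = 0 := by rw [hb1, sub_self]
  have k3 : u2 * u3 * u1 - u1 * (u2 * u3) = 0 := by rw [hq1, sub_self]
  have cert :
      u1 ^ 4 -
        ((u1 + u2 + u3 + u4) * u1 ^ 3 -
          (u1 * u3 + u1 * u2 + u1 * u4 + u2 * u4 + u3 * u4 + u2 * u3) * u1 ^ 2 +
          (u1 * u2 * u4 + u1 * u3 * u4 + u1 * u2 * u3 + u2 * u3 * u4) * u1 -
          u1 * u2 * u3 * u4) =
      -(((u2 + u3) * u1 - u1 * (u2 + u3)) * u1 ^ 2) +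
        (u1 * u4 - u4 * u1) * u1 ^ 2 +
        (u2 * u3 * u1 - u1 * (u2 * u3)) * u1 +
        (-((u2 + u3) * (u1 * u4 - u4 * u1)) + ((u2 + u3) * u1 - u1 * (u2 + u3)) * u4) * u1 +
        ((u2 * u3) * (u1 * u4 - u4 * u1) - (u2 * u3 * u1 - u1 * (u2 * u3)) * u4) := by
    noncomm_ring
  rw [k1, k2, k3] at cert
  simp only [zero_mul, mul_zero, neg_zero, add_zero, zero_add, sub_zero, sub_self] at cert
  exact sub_eq_zero.mp cert

set_option maxHeartbeats 1000000 in
private lemma conj_add_key {V : Type*} [AddCommGroup V] [Module ℝ V] (Q : QuadraticForm ℝ V)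
    (h : Module.finrank ℝ V = 3) (W x : CliffordAlgebra Q) :
    (W + reverse (involute W)) * x = x * (W + reverse (involute W)) := by
  haveI : FiniteDimensional ℝ V := FiniteDimensional.of_finrank_eq_succ h
  haveI : Invertible (2 : ℝ) := invertibleOfNonzero two_ne_zero
  obtain ⟨v, hv⟩ := LinearMap.BilinForm.exists_orthogonal_basis
    (B := QuadraticMap.associatedHom ℝ Q) ⟨QuadraticMap.associated_isSymm ℝ Q⟩
  let b : Module.Basis (Fin 3) ℝ V := v.reindex (finCongr h)
  have hb : ∀ i j : Fin 3, i ≠ j → Q.IsOrtho (b i) (b j) := by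
    intro i j hij
    rw [← QuadraticMap.associated_isOrtho]
    have := hv (i := (finCongr h).symm i) (j := (finCongr h).symm j)
      ((finCongr h).symm.injective.ne hij)
    simpa [b, Module.Basis.reindex_apply] using this
  set g : Fin 3 → CliffordAlgebra Q := fun i => ι Q (b i) with hg
  -- rewriting lemmas
  have hs10 : g 1 * g 0 = -(g 0 * g 1) := ι_mul_ι_comm_of_isOrtho (hb 1 0 (by decide))
  have hs20 : g 2 * g 0 = -(g 0 * g 2) := ι_mul_ι_comm_of_isOrtho (hb 2 0 (by decide))
  have hs21 : g 2 * g 1 = -(g 1 * g 2) := ι_mul_ι_comm_of_isOrtho (hb 2 1 (by decide))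
  have hc10 : ∀ x, g 1 * (g 0 * x) = -(g 0 * (g 1 * x)) :=
    fun x => ι_mul_ι_mul_of_isOrtho x (hb 1 0 (by decide))
  have hc20 : ∀ x, g 2 * (g 0 * x) = -(g 0 * (g 2 * x)) :=
    fun x => ι_mul_ι_mul_of_isOrtho x (hb 2 0 (by decide))
  have hc21 : ∀ x, g 2 * (g 1 * x) = -(g 1 * (g 2 * x)) :=
    fun x => ι_mul_ι_mul_of_isOrtho x (hb 2 1 (by decide))
  have hq : ∀ i, g i * g i = Q (b i) • (1 : CliffordAlgebra Q) := by
    intro i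
    rw [hg]
    rw [ι_sq_scalar, Algebra.algebraMap_eq_smul_one]
  have hqc : ∀ i x, g i * (g i * x) = Q (b i) • x := by
    intro i x
    rw [← mul_assoc, hg, ι_sq_scalar, Algebra.smul_def]
  have e2 : (⟨2, by norm_num⟩ : Fin 3) = 2 := rfl
  -- the spanning submodule
  set S : Submodule ℝ (CliffordAlgebra Q) := Submodule.span ℝ
    {1, g 0, g 1, g 2, g 0 * g 1, g 0 * g 2, g 1 * g 2, g 0 * (g 1 * g 2)} with hS
  have m1 : (1 : CliffordAlgebra Q) ∈ S := Submodule.subset_span (Or.inl rfl)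
  have m0 : g 0 ∈ S := Submodule.subset_span (Or.inr (Or.inl rfl))
  have mA : g 1 ∈ S := Submodule.subset_span (Or.inr (Or.inr (Or.inl rfl)))
  have mB : g 2 ∈ S := Submodule.subset_span (Or.inr (Or.inr (Or.inr (Or.inl rfl))))
  have m01 : g 0 * g 1 ∈ S :=
    Submodule.subset_span (Or.inr (Or.inr (Or.inr (Or.inr (Or.inl rfl)))))
  have m02 : g 0 * g 2 ∈ S :=
    Submodule.subset_span (Or.inr (Or.inr (Or.inr (Or.inr (Or.inr (Or.inl rfl))))))
  have m12 : g 1 * g 2 ∈ S :=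
    Submodule.subset_span (Or.inr (Or.inr (Or.inr (Or.inr (Or.inr (Or.inr (Or.inl rfl)))))))
  have m012 : g 0 * (g 1 * g 2) ∈ S :=
    Submodule.subset_span (Or.inr (Or.inr (Or.inr (Or.inr (Or.inr (Or.inr (Or.inr rfl)))))))
  -- closure under right multiplication by generators
  have hr : ∀ x ∈ S, ∀ k : Fin 3, x * g k ∈ S := by
    intro x hx k
    induction hx using Submodule.span_induction with
    | mem y hy =>
      simp only [Set.mem_insert_iff, Set.mem_singleton_iff] at hy
      rcases hy with rfl | rfl | rfl | rfl | rfl | rfl | rfl | rfl <;> fin_cases k <;>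
        simp only [Fin.zero_eta, Fin.mk_one, e2, one_mul, mul_assoc, hs10, hs20, hs21, hc10, hc20, hc21, hq, hqc,
          mul_neg, neg_neg, mul_one, mul_smul_comm, smul_smul, one_mul] <;>
        first
          | assumption
          | exact S.neg_mem (by assumption)
          | exact S.smul_mem _ (by assumption)
          | exact S.neg_mem (S.smul_mem _ (by assumption))
          | exact S.smul_mem _ (S.neg_mem (by assumption))
    | zero => simpa using S.zero_mem
    | add a c _ _ ha hc => rw [add_mul]; exact S.add_mem ha hc
    | smul r a _ ha => rw [smul_mul_assoc]; exact S.smul_mem r ha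
  -- S is everything
  have hStop : ∀ y : CliffordAlgebra Q, y ∈ S := by
    intro y
    induction y using CliffordAlgebra.induction with
    | algebraMap r => rw [Algebra.algebraMap_eq_smul_one]; exact S.smul_mem r m1
    | ι m =>
      have hm : m ∈ Submodule.span ℝ (Set.range b) := by rw [b.span_eq]; trivial
      induction hm using Submodule.span_induction with
      | mem z hz =>
        obtain ⟨i, rfl⟩ := hz
        fin_cases i <;> assumption
      | zero => rw [map_zero]; exact S.zero_mem
      | add a c _ _ ha hc => rw [map_add]; exact S.add_mem ha hc
      | smul r a _ ha => rw [map_smul]; exact S.smul_mem r ha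
    | mul a c ha hc =>
      have key : ∀ y ∈ S, a * y ∈ S := by
        intro y hy
        induction hy using Submodule.span_induction with
        | mem z hz =>
          simp only [Set.mem_insert_iff, Set.mem_singleton_iff] at hz
          rcases hz with rfl | rfl | rfl | rfl | rfl | rfl | rfl | rfl
          · rwa [mul_one]
          · exact hr a ha 0
          · exact hr a ha 1
          · exact hr a ha 2
          · rw [← mul_assoc]; exact hr _ (hr a ha 0) 1
          · rw [← mul_assoc]; exact hr _ (hr a ha 0) 2
          · rw [← mul_assoc]; exact hr _ (hr a ha 1) 2
          · rw [← mul_assoc, ← mul_assoc]; exact hr _ (hr _ (hr a ha 0) 1) 2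
        | zero => rw [mul_zero]; exact S.zero_mem
        | add p q _ _ hp hq => rw [mul_add]; exact S.add_mem hp hq
        | smul r p _ hp => rw [mul_smul_comm]; exact S.smul_mem r hp
      exact key c hc
    | add a c ha hc => exact S.add_mem ha hc
  -- elements of the form W + conj W commute with the generators
  have hcomm_g : ∀ (W : CliffordAlgebra Q) (k : Fin 3),
      (W + reverse (involute W)) * g k = g k * (W + reverse (involute W)) := by
    intro W k
    have cj1 : reverse (involute (1 : CliffordAlgebra Q)) = 1 := by simp
    have cjg : ∀ i : Fin 3, reverse (involute (g i)) = -(g i) := by intro i; simp [hg]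
    have cjgg : ∀ i j : Fin 3, reverse (involute (g i * g j)) = g j * g i := by
      intro i j; simp [hg]
    have cjggg : ∀ i j l : Fin 3,
        reverse (involute (g i * (g j * g l))) = -(g l * (g j * g i)) := by
      intro i j l; simp [hg, mul_assoc]
    have hW := hStop W
    induction hW using Submodule.span_induction with
    | mem y hy =>
      simp only [Set.mem_insert_iff, Set.mem_singleton_iff] at hy
      rcases hy with rfl | rfl | rfl | rfl | rfl | rfl | rfl | rfl <;> fin_cases k <;>
        simp only [Fin.zero_eta, Fin.mk_one, e2, cj1, cjg, cjgg, cjggg] <;>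
        simp only [add_mul, mul_add, one_mul, mul_one, mul_assoc, hs10, hs20, hs21,
          hc10, hc20, hc21, hq, hqc, mul_neg, neg_mul, neg_neg,
          mul_smul_comm, smul_mul_assoc, smul_smul, smul_neg, add_neg_cancel, neg_add_cancel,
          add_zero, zero_add, zero_mul, mul_zero, smul_zero]
    | zero => simp
    | add p q _ _ hp hq =>
      simp only [map_add]
      rw [add_add_add_comm, add_mul, hp, hq, ← mul_add, ← add_add_add_comm]
    | smul r p _ hp =>
      simp only [map_smul, ← smul_add, smul_mul_assoc, mul_smul_comm, hp]
  -- extend to products with ι of arbitrary vectors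
  have hcomm_ι : ∀ (W : CliffordAlgebra Q) (m : V),
      (W + reverse (involute W)) * ι Q m = ι Q m * (W + reverse (involute W)) := by
    intro W m
    have hm : m ∈ Submodule.span ℝ (Set.range b) := by rw [b.span_eq]; trivial
    induction hm using Submodule.span_induction with
    | mem z hz => obtain ⟨i, rfl⟩ := hz; exact hcomm_g W i
    | zero => simp
    | add p q _ _ hp hq => rw [map_add, mul_add, hp, hq, add_mul]
    | smul r p _ hp => rw [map_smul, mul_smul_comm, smul_mul_assoc, hp]
  -- extend to all elements
  induction x using CliffordAlgebra.induction with
  | algebraMap r => exact (Algebra.commutes r _).symm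
  | ι m => exact hcomm_ι W m
  | mul a c ha hc => rw [← mul_assoc, ha, mul_assoc, hc, ← mul_assoc]
  | add a c ha hc => rw [mul_add, ha, hc, add_mul]

theorem stmt_17 {V : Type*} [AddCommGroup V] [Module ℝ V] (Q : QuadraticForm ℝ V)
    (h : Module.finrank ℝ V = 3) (U : CliffordAlgebra Q) :
    U ^ 4 =
      (U + involute U + reverse U + reverse (involute U)) * U ^ 3 -
        (U * reverse U + U * involute U + U * reverse (involute U) +
          involute U * reverse (involute U) + reverse U * reverse (involute U) +
          involute U * reverse U) * U ^ 2 +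
        (U * involute U * reverse (involute U) + U * reverse U * reverse (involute U) +
          U * involute U * reverse U + involute U * reverse U * reverse (involute U)) * U -
        U * involute U * reverse U * reverse (involute U) := by
  have key := conj_add_key Q h
  have h14 : U * reverse (involute U) = reverse (involute U) * U := by
    have hk := key U U
    rw [add_mul, mul_add] at hk
    exact (add_left_cancel hk).symm
  have hb1 : (involute U + reverse U) * U = U * (involute U + reverse U) := by
    have hk := key (involute U) U
    rwa [involute_involute] at hk
  have hq1 : involute U * reverse U * U = U * (involute U * reverse U) := by
    have hcj : reverse (involute (involute U * reverse U)) = involute U * reverse U := by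
      rw [map_mul, involute_involute, reverse.map_mul, reverse_involute, reverse_reverse]
    have hk := key (involute U * reverse U) U
    rw [hcj, add_mul, mul_add] at hk
    have h2 : (2 : ℝ) • (involute U * reverse U * U) = (2 : ℝ) • (U * (involute U * reverse U)) := by
      rw [two_smul, two_smul]; exact hk
    exact smul_right_injective _ two_ne_zero h2
  exact auxCH U (involute U) (reverse U) (reverse (involute U)) h14 hb1 hq1
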